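/- Let F* be a maximum-value multicommodity flow partially routing integral demand D with step length t, total length T, and congestion 1, in a graph G with integral edge lengths. For p ≥ 0, let F*_p be the subflow of F* of flow paths of length at most 2^p, routing demand D*_p. Suppose F_{p-1} is any flow routing a subdemand D_{F_{p-1}} of D with val(F_{p-1}) ≥ val(F*_{p-1}). Then the demand D^Δ_p = min(D − D_{F_{p-1}}, D*_p) (pointwise minimum) is routable by a flow of step length t, length at most 2^p, and congestion 1, and |D^Δ_p| ≥ val(F*_p) − val(F_{p-1}). -/

import Mathlib

open Finset
open scoped Classical

noncomputable section

/-- The consecutive edge pairs of a walk given by its vertex list. -/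
def pathPairs {V : Type*} (p : List V) : List (V × V) := p.zip p.tail

/-- The number of edges (steps) of a walk. -/
def steps {V : Type*} (p : List V) : ℕ := (pathPairs p).length

/-- The length of a walk with respect to edge lengths `ℓ`. -/
def plen {V : Type*} (ℓ : V → V → ℝ) (p : List V) : ℝ :=
  ((pathPairs p).map fun q => ℓ q.1 q.2).sum

/-- `p` is a (nonempty) walk of the graph with adjacency `adj`. -/
def IsWalk {V : Type*} (adj : V → V → Prop) (p : List V) : Prop :=
  p ≠ [] ∧ p.Chain' adj

/-- The total flow of `F` through the (undirected) edge `{x, y}`. -/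
def edgeFlow {V : Type*} [DecidableEq V] (F : List V →₀ ℝ) (x y : V) : ℝ :=
  F.sum fun p c => c * (((pathPairs p).count (x, y) + (pathPairs p).count (y, x) : ℕ) : ℝ)

/-- The demand routed by the flow `F` from `v` to `w`. -/
def routed {V : Type*} [DecidableEq V] (F : List V →₀ ℝ) (v w : V) : ℝ :=
  F.sum fun p c => if p.head? = some v ∧ p.getLast? = some w then c else 0

/-- The total value of the flow `F`. -/
def flowVal {V : Type*} (F : List V →₀ ℝ) : ℝ := F.sum fun _ c => c

/-- A demand `D` is `A`-respecting if its row and column sums are bounded by `A`. -/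
def ARespecting {V : Type*} [Fintype V] (A : V → ℝ) (D : V → V → ℝ) : Prop :=
  ∀ v, (∑ w, D v w) ≤ A v ∧ (∑ w, D w v) ≤ A v

/-- **Per-scale residual demand is routable (analysis of `LowStepNonConcFlow`).** Let
`F*` (=`Fs`) be a maximum-value flow partially routing the integral demand `D` with step
length `t`, total length `T` and congestion `1`; let `F*_p` be its subflow of paths of
length at most `2^p`, routing demand `D*_p`. If `F_{p−1}` (=`Fm`) is any flow routing a
subdemand of `D` with `val(F_{p−1}) ≥ val(F*_{p−1})`, then the demand
`D^Δ_p = min(D − D_{F_{p−1}}, D*_p)` is routable by a flow of step length `t`, maximum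
length `2^p` and congestion `1`, and `|D^Δ_p| ≥ val(F*_p) − val(F_{p−1})`. -/
theorem residual_demand_routable {V : Type*} [Fintype V] [DecidableEq V]
    (adj : V → V → Prop) (u ℓ : V → V → ℝ) (D : V → V → ℝ)
    (t : ℕ) (T : ℝ) (p₀ : ℕ)
    (hl : ∀ x y, adj x y → 1 ≤ ℓ x y)
    (hD0 : ∀ v w, 0 ≤ D v w) (hDint : ∀ v w, ∃ k : ℕ, D v w = (k : ℝ))
    (Fs : List V →₀ ℝ)
    (hFs0 : ∀ p, 0 ≤ Fs p)
    (hFsw : ∀ p ∈ Fs.support, IsWalk adj p ∧ steps p ≤ t)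
    (hFscong : ∀ x y, edgeFlow Fs x y ≤ u x y)
    (hFsD : ∀ v w, routed Fs v w ≤ D v w)
    (hFstot : (Fs.sum fun p c => c * plen ℓ p) ≤ T)
    (hFsmax : ∀ F2 : List V →₀ ℝ, (∀ p, 0 ≤ F2 p) →
      (∀ p ∈ F2.support, IsWalk adj p ∧ steps p ≤ t) →
      (∀ x y, edgeFlow F2 x y ≤ u x y) →
      (∀ v w, routed F2 v w ≤ D v w) →
      (F2.sum fun p c => c * plen ℓ p) ≤ T →
      flowVal F2 ≤ flowVal Fs)
    (Fm : List V →₀ ℝ)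
    (hFm0 : ∀ p, 0 ≤ Fm p)
    (hFmw : ∀ p ∈ Fm.support, IsWalk adj p)
    (hFmD : ∀ v w, routed Fm v w ≤ D v w)
    (hFmval : (Fs.sum fun q c => if plen ℓ q ≤ 2 ^ (p₀ - 1) then c else 0)
      ≤ flowVal Fm) :
    ∃ Fd : List V →₀ ℝ,
      (∀ q, 0 ≤ Fd q) ∧
      (∀ q ∈ Fd.support, IsWalk adj q ∧ steps q ≤ t ∧ plen ℓ q ≤ 2 ^ p₀) ∧
      (∀ x y, edgeFlow Fd x y ≤ u x y) ∧
      (∀ v w, routed Fd v w =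
        min (D v w - routed Fm v w)
          (Fs.sum fun q c =>
            if q.head? = some v ∧ q.getLast? = some w ∧ plen ℓ q ≤ 2 ^ p₀
            then c else 0)) ∧
      ((Fs.sum fun q c => if plen ℓ q ≤ 2 ^ p₀ then c else 0) - flowVal Fm
        ≤ ∑ v, ∑ w, min (D v w - routed Fm v w)
          (Fs.sum fun q c =>
            if q.head? = some v ∧ q.getLast? = some w ∧ plen ℓ q ≤ 2 ^ p₀
            then c else 0)) := by
  
  classical
  set S : V → V → ℝ := fun v w => Fs.sum fun q c =>
      if q.head? = some v ∧ q.getLast? = some w ∧ plen ℓ q ≤ 2 ^ p₀ then c else 0 with hSdef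
  have hRFm0 : ∀ v w, 0 ≤ routed Fm v w := by
    intro v w
    refine Finset.sum_nonneg fun q hq => ?_
    dsimp only
    split_ifs
    · exact hFm0 q
    · exact le_rfl
  have hS0 : ∀ v w, 0 ≤ S v w := by
    intro v w
    refine Finset.sum_nonneg fun q hq => ?_
    dsimp only
    split_ifs
    · exact hFs0 q
    · exact le_rfl
  have hSle : ∀ v w, S v w ≤ D v w := by
    intro v w
    refine le_trans ?_ (hFsD v w)
    refine Finset.sum_le_sum fun q hq => ?_
    dsimp only
    split_ifs with h1 h2
    · exact le_rfl
    · exact absurd ⟨h1.1, h1.2.1⟩ h2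
    · exact hFs0 q
    · exact le_rfl
  set m : V → V → ℝ := fun v w => min (D v w - routed Fm v w) (S v w) with hmdef
  have hm0 : ∀ v w, 0 ≤ m v w :=
    fun v w => le_min (by linarith [hFmD v w]) (hS0 v w)
  set lam : V → V → ℝ := fun v w => m v w / S v w with hlamdef
  have hlam0 : ∀ v w, 0 ≤ lam v w := fun v w => div_nonneg (hm0 v w) (hS0 v w)
  have hlam1 : ∀ v w, lam v w ≤ 1 := by
    intro v w
    rcases eq_or_lt_of_le (hS0 v w) with h | h
    · simp [hlamdef, ← h]
    · exact (div_le_one h).mpr (min_le_right _ _)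
  have hlamS : ∀ v w, lam v w * S v w = m v w := by
    intro v w
    rcases eq_or_lt_of_le (hS0 v w) with h | h
    · have hm : m v w = 0 := by
        rw [hmdef]
        simp only
        rw [← h, min_eq_right (by linarith [hFmD v w])]
      simp [hlamdef, ← h, hm]
    · exact div_mul_cancel₀ _ (ne_of_gt h)
  set scale : List V → ℝ := fun q =>
      if plen ℓ q ≤ 2 ^ p₀ then
        q.head?.elim 0 (fun v => q.getLast?.elim 0 fun w => lam v w)
      else 0 with hscaledef
  have hscale0 : ∀ q, 0 ≤ scale q := by
    intro q
    rw [hscaledef]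
    simp only
    split_ifs
    · cases q.head? with
      | none => simp
      | some v =>
        cases q.getLast? with
        | none => simp
        | some w => simpa using hlam0 v w
    · exact le_rfl
  have hscale1 : ∀ q, scale q ≤ 1 := by
    intro q
    rw [hscaledef]
    simp only
    split_ifs
    · cases q.head? with
      | none => simp
      | some v =>
        cases q.getLast? with
        | none => simp
        | some w => simpa using hlam1 v w
    · exact zero_le_one
  have hsub : ∀ a : List V, (fun q => scale q * Fs q) a ≠ 0 → a ∈ Fs.support := by
    intro a ha
    rw [Finsupp.mem_support_iff]
    intro h
    apply ha
    simp [h]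
  set Fd : List V →₀ ℝ := Finsupp.onFinset Fs.support (fun q => scale q * Fs q) hsub
    with hFddef
  refine ⟨Fd, ?_, ?_, ?_, ?_, ?_⟩
  · intro q
    exact mul_nonneg (hscale0 q) (hFs0 q)
  · intro q hq
    rw [Finsupp.mem_support_iff, Finsupp.onFinset_apply] at hq
    have hFsq : Fs q ≠ 0 := by
      intro h; apply hq; simp [h]
    have hqs := hFsw q (Finsupp.mem_support_iff.mpr hFsq)
    refine ⟨hqs.1, hqs.2, ?_⟩
    by_contra hp
    apply hq
    rw [hscaledef]
    simp [hp]
  · intro x y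
    refine le_trans ?_ (hFscong x y)
    rw [edgeFlow, Finsupp.sum_of_support_subset _ Finsupp.support_onFinset_subset _
      (by intros; simp)]
    rw [edgeFlow, Finsupp.sum]
    refine Finset.sum_le_sum fun q hq => ?_
    rw [Finsupp.onFinset_apply]
    refine mul_le_mul_of_nonneg_right ?_ (Nat.cast_nonneg _)
    calc scale q * Fs q ≤ 1 * Fs q :=
          mul_le_mul_of_nonneg_right (hscale1 q) (hFs0 q)
      _ = Fs q := one_mul _
  · intro v w
    show routed _ v w = m v w
    rw [routed, Finsupp.sum_of_support_subset _ Finsupp.support_onFinset_subset _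
      (by intros; simp)]
    have : ∀ q ∈ Fs.support,
        (if q.head? = some v ∧ q.getLast? = some w then Fd q else 0) =
        lam v w * (if q.head? = some v ∧ q.getLast? = some w ∧ plen ℓ q ≤ 2 ^ p₀
          then Fs q else 0) := by
      intro q hq
      rw [hFddef, Finsupp.onFinset_apply]
      by_cases h1 : q.head? = some v ∧ q.getLast? = some w
      · rw [if_pos h1, hscaledef]
        simp only [h1.1, h1.2, Option.elim]
        by_cases h2 : plen ℓ q ≤ 2 ^ p₀ <;> simp [h2]
      · rw [if_neg h1, if_neg (by tauto), mul_zero]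
    rw [Finset.sum_congr rfl this, ← Finset.mul_sum]
    have hSeq : S v w = ∑ q ∈ Fs.support,
        (if q.head? = some v ∧ q.getLast? = some w ∧ plen ℓ q ≤ 2 ^ p₀
          then Fs q else 0) := rfl
    rw [← hSeq, hlamS]
  · have hkey : ∀ v w, S v w - routed Fm v w ≤ m v w := by
      intro v w
      exact le_min (by linarith [hSle v w]) (by linarith [hRFm0 v w])
    have hSsum : (∑ v, ∑ w, S v w)
        = Fs.sum fun q c => if plen ℓ q ≤ 2 ^ p₀ then c else 0 := by
      have hSexp : ∀ v w, S v w = ∑ q ∈ Fs.support,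
          (if q.head? = some v ∧ q.getLast? = some w ∧ plen ℓ q ≤ 2 ^ p₀
            then Fs q else 0) := fun _ _ => rfl
      have h1 : (∑ v, ∑ w, S v w) = ∑ q ∈ Fs.support, ∑ v : V, ∑ w : V,
          (if q.head? = some v ∧ q.getLast? = some w ∧ plen ℓ q ≤ 2 ^ p₀
            then Fs q else 0) := by
        simp only [hSexp]
        exact (Finset.sum_congr rfl fun v _ => Finset.sum_comm).trans Finset.sum_comm
      rw [h1, Finsupp.sum]
      refine Finset.sum_congr rfl fun q hq => ?_
      have hne : q ≠ [] := ((hFsw q hq).1).1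
      rw [List.head?_eq_head hne, List.getLast?_eq_getLast hne]
      simp [Option.some.injEq, ite_and, Finset.sum_ite_eq]
    have hRsum : (∑ v, ∑ w, routed Fm v w) = flowVal Fm := by
      have hRexp : ∀ v w, routed Fm v w = ∑ q ∈ Fm.support,
          (if q.head? = some v ∧ q.getLast? = some w then Fm q else 0) := fun _ _ => rfl
      have h1 : (∑ v, ∑ w, routed Fm v w) = ∑ q ∈ Fm.support, ∑ v : V, ∑ w : V,
          (if q.head? = some v ∧ q.getLast? = some w then Fm q else 0) := by
        simp only [hRexp]
        exact (Finset.sum_congr rfl fun v _ => Finset.sum_comm).trans Finset.sum_comm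
      rw [h1, flowVal, Finsupp.sum]
      refine Finset.sum_congr rfl fun q hq => ?_
      have hne : q ≠ [] := (hFmw q hq).1
      rw [List.head?_eq_head hne, List.getLast?_eq_getLast hne]
      simp [Option.some.injEq, ite_and, Finset.sum_ite_eq]
    calc (Fs.sum fun q c => if plen ℓ q ≤ 2 ^ p₀ then c else 0) - flowVal Fm
        = (∑ v, ∑ w, S v w) - ∑ v, ∑ w, routed Fm v w := by rw [hSsum, hRsum]
      _ = ∑ v, ∑ w, (S v w - routed Fm v w) := by
          rw [← Finset.sum_sub_distrib]
          exact Finset.sum_congr rfl fun v _ => (Finset.sum_sub_distrib _ _).symm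
      _ ≤ ∑ v, ∑ w, m v w :=
          Finset.sum_le_sum fun v _ => Finset.sum_le_sum fun w _ => hkey v w
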